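/- Let n ≥ 1, L = 2n+1, let a,b,c,d be nonzero real numbers satisfying (a²+ab)(b²+ab) = (c²+ab)(d²+ab), and set ζ = cd/(ab). Then ⟨Φ̄_n(ζ⁻¹) | T |↑⋯↑⟩ = (a+b)^{2n+1}, where T is the eight-vertex transfer matrix on V^L and |↑⋯↑⟩ is the basis state with all spins up. -/

import Mathlib

open scoped BigOperators

noncomputable section

namespace EightVertex

/-- Spin configurations of a chain of length `L`: `0` is spin up, `1` is spin down. -/
abbrev Cfg (L : ℕ) := Fin L → Fin 2

/-- The Hilbert space `V^L = (ℂ²)^{⊗L}`, with its canonical orthonormal basis indexed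
by spin configurations and the standard Hermitian inner product (conjugate-linear in
the first argument). -/
abbrev V (L : ℕ) := EuclideanSpace ℂ (Cfg L)

/-- The canonical basis state `|s₁ ⋯ s_L⟩`. -/
def bs {L : ℕ} (s : Cfg L) : V L := EuclideanSpace.single s 1

/-- The all-spins-up basis state `|↑⋯↑⟩`. -/
def allUp (L : ℕ) : V L := bs (fun _ => 0)

/-- Cyclic successor on `Fin L`. -/
def cyc {L : ℕ} (j : Fin L) : Fin L := ⟨((j : ℕ) + 1) % L, Nat.mod_lt _ j.pos⟩

/-- Matrix of the translation operator `S`: `S|s₁⋯s_L⟩ = |s_L s₁ ⋯ s_{L-1}⟩`. -/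
def Smat (L : ℕ) : Matrix (Cfg L) (Cfg L) ℂ :=
  fun s' s => if (∀ j, s' (cyc j) = s j) then 1 else 0

/-- The translation operator `S` on `V^L`. -/
def Sop (L : ℕ) : V L →ₗ[ℂ] V L := Matrix.toEuclideanLin (Smat L)

/-- The subspace `W^L ⊆ V^L` of alternate-cyclic states: the eigenspace of the
translation operator with eigenvalue `(-1)^{L+1}`. -/
def W (L : ℕ) : Submodule ℂ (V L) :=
  Module.End.eigenspace (Sop L : Module.End ℂ (V L)) ((-1 : ℂ) ^ (L + 1))

def sigmaX : Matrix (Fin 2) (Fin 2) ℂ := !![0, 1; 1, 0]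
def sigmaY : Matrix (Fin 2) (Fin 2) ℂ := !![0, -Complex.I; Complex.I, 0]
def sigmaZ : Matrix (Fin 2) (Fin 2) ℂ := !![1, 0; 0, -1]

/-- The one-site operator `A_j` acting on site `j` of the chain. -/
def site {L : ℕ} (A : Matrix (Fin 2) (Fin 2) ℂ) (j : Fin L) : Matrix (Cfg L) (Cfg L) ℂ :=
  fun s' s => A (s' j) (s j) * ∏ k ∈ Finset.univ.erase j, (if s' k = s k then (1 : ℂ) else 0)

/-- Matrix of the periodic XYZ Hamiltonian
`H = -(1/2) ∑_j (Jx σ^x_j σ^x_{j+1} + Jy σ^y_j σ^y_{j+1} + Jz σ^z_j σ^z_{j+1})`. -/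
def HxyzMat (Jx Jy Jz : ℝ) (L : ℕ) : Matrix (Cfg L) (Cfg L) ℂ :=
  (-(1/2) : ℂ) • ∑ j : Fin L,
    ((Jx : ℂ) • (site sigmaX j * site sigmaX (cyc j)) +
     (Jy : ℂ) • (site sigmaY j * site sigmaY (cyc j)) +
     (Jz : ℂ) • (site sigmaZ j * site sigmaZ (cyc j)))

/-- The periodic XYZ Hamiltonian on `V^L`. -/
def Hxyz (Jx Jy Jz : ℝ) (L : ℕ) : V L →ₗ[ℂ] V L := Matrix.toEuclideanLin (HxyzMat Jx Jy Jz L)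

/-- The XYZ Hamiltonian with the supersymmetric anisotropy parameters
`Jx = 1+ζ`, `Jy = 1-ζ`, `Jz = (ζ²-1)/2`. -/
def HxyzSusy (ζ : ℝ) (L : ℕ) : V L →ₗ[ℂ] V L :=
  Hxyz (1 + ζ) (1 - ζ) ((ζ ^ 2 - 1) / 2) L

/-- The ground-state energy `E₀ = -(2n+1)(3+ζ²)/4`. -/
def E0 (n : ℕ) (ζ : ℝ) : ℝ := -(2 * (n : ℝ) + 1) * (3 + ζ ^ 2) / 4

/-- Matrix of the spin-parity operator `P = (-1)^L σ^z_1 ⋯ σ^z_L`. -/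
def Pmat (L : ℕ) : Matrix (Cfg L) (Cfg L) ℂ :=
  fun s' s => if s' = s then (-1 : ℂ) ^ L * ∏ j, (if s j = 0 then (1 : ℂ) else -1) else 0

/-- The spin-parity operator `P` on `V^L`. -/
def Pop (L : ℕ) : V L →ₗ[ℂ] V L := Matrix.toEuclideanLin (Pmat L)

/-- Spin flip on a single site. -/
def flip : Fin 2 → Fin 2 := fun x => if x = 0 then 1 else 0

/-- Matrix of the spin-reversal operator `R = σ^x_1 ⋯ σ^x_L`. -/
def Rrevmat (L : ℕ) : Matrix (Cfg L) (Cfg L) ℂ :=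
  fun s' s => if (∀ j, s' j = flip (s j)) then 1 else 0

/-- The spin-reversal operator `R` on `V^L`. -/
def Rrev (L : ℕ) : V L →ₗ[ℂ] V L := Matrix.toEuclideanLin (Rrevmat L)

/-- Entries of the eight-vertex `R`-matrix with weights `a,b,c,d`.  In each pair the
first component is the auxiliary-space index, the second one the physical index;
the first argument is the outgoing pair, the second the incoming pair.  In the
ordered basis `↑↑, ↑↓, ↓↑, ↓↓` its rows are `(a,0,0,d), (0,b,c,0), (0,c,b,0), (d,0,0,a)`. -/
def Rv (a b c d : ℂ) : Fin 2 × Fin 2 → Fin 2 × Fin 2 → ℂ := fun o i =>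
  if o = i then (if o.1 = o.2 then a else b)
  else if o.1 = i.2 ∧ o.2 = i.1 ∧ i.1 ≠ i.2 then c
  else if o.1 = o.2 ∧ i.1 = i.2 ∧ o.1 ≠ i.1 then d
  else 0

/-- Matrix of the transfer matrix `T = tr₀(R₀L ⋯ R₀1)` of the eight-vertex model. -/
def Tmat (a b c d : ℂ) (L : ℕ) : Matrix (Cfg L) (Cfg L) ℂ :=
  fun s' s => ∑ t : Cfg L, ∏ j : Fin L, Rv a b c d (t (cyc j), s' j) (t j, s j)

/-- The transfer matrix `T` of the eight-vertex model on `V^L`. -/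
def Top (a b c d : ℂ) (L : ℕ) : V L →ₗ[ℂ] V L := Matrix.toEuclideanLin (Tmat a b c d L)

/-- Entries of the local supercharge `q(ζ) : ℂ² → ℂ² ⊗ ℂ²`, `q|↑⟩ = 0`,
`q|↓⟩ = |↑↑⟩ - ζ|↓↓⟩`; arguments: incoming spin, the two outgoing spins. -/
def qloc (ζ : ℂ) (si o1 o2 : Fin 2) : ℂ :=
  if si = 1 then
    (if o1 = 0 ∧ o2 = 0 then 1 else if o1 = 1 ∧ o2 = 1 then -ζ else 0)
  else 0

/-- Position of site `k` of the original chain after insertion of one site at `j`. -/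
def insIdx {L : ℕ} (j k : Fin L) : Fin (L + 1) :=
  if (k : ℕ) < (j : ℕ) then k.castSucc else k.succ

/-- Matrix of the local supercharge `q_j : V^L → V^{L+1}` acting on the `j`-th site
(`j : Fin L` corresponds to the paper's `j+1 ∈ {1,…,L}`). -/
def qjMat (ζ : ℂ) {L : ℕ} (j : Fin L) : Matrix (Cfg (L + 1)) (Cfg L) ℂ :=
  fun s' s => qloc ζ (s j) (s' j.castSucc) (s' j.succ) *
    ∏ k ∈ Finset.univ.erase j, (if s' (insIdx j k) = s k then (1 : ℂ) else 0)

/-- Matrix of `∑_{j=0}^{L} (-1)^j q_j`, where `q_0 = S q_L`. -/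
def QsumMat (ζ : ℂ) : (L : ℕ) → Matrix (Cfg (L + 1)) (Cfg L) ℂ
  | 0 => 0
  | (M + 1) =>
      Smat (M + 2) * qjMat ζ (Fin.last M) +
      ∑ j : Fin (M + 1), ((-1 : ℂ) ^ ((j : ℕ) + 1)) • qjMat ζ j

/-- The supercharge `Q(ζ) : V^L → V^{L+1}`: it acts as
`√(L/(L+1)) ∑_{j=0}^L (-1)^j q_j` on the alternate-cyclic subspace `W^L` and as zero
on the other eigenspaces of the translation operator (equivalently, on the orthogonal
complement of `W^L`, since `S` is unitary). -/
def Qsc (ζ : ℝ) (L : ℕ) : V L →ₗ[ℂ] V (L + 1) :=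
  (Real.sqrt ((L : ℝ) / ((L : ℝ) + 1)) : ℂ) •
    ((Matrix.toEuclideanLin (QsumMat (ζ : ℂ) L)) ∘ₗ
      ((W L).subtype ∘ₗ ((W L).orthogonalProjection).toLinearMap))

/-- The adjoint supercharge `Q(ζ)† : V^L → V^{L-1}`. -/
def Qadj (ζ : ℝ) : (L : ℕ) → (V L →ₗ[ℂ] V (L - 1))
  | 0 => 0
  | (K + 1) => LinearMap.adjoint (Qsc ζ K)

/-- Number of down spins of a configuration. -/
def nDown {L : ℕ} (s : Cfg L) : ℕ := (Finset.univ.filter fun j => s j = 1).card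

/-- The state `Φ_n(ζ) = ∑_{m=0}^{n} ζ^m ∑_{x₁<⋯<x_{2m+1}} ||x₁,…,x_{2m+1}⟩⟩`. -/
def Phi (ζ : ℝ) (n : ℕ) : V (2 * n + 1) :=
  ∑ s : Cfg (2 * n + 1),
    (if nDown s % 2 = 1 then ((ζ : ℂ) ^ (nDown s / 2)) else 0) • bs s

/-- The state `Φ̄_n(ζ) = ∑_{m=0}^{n} ζ^m ∑_{x₁<⋯<x_{2m}} ||x₁,…,x_{2m}⟩⟩`. -/
def PhiBar (ζ : ℝ) (n : ℕ) : V (2 * n + 1) :=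
  ∑ s : Cfg (2 * n + 1),
    (if nDown s % 2 = 0 then ((ζ : ℂ) ^ (nDown s / 2)) else 0) • bs s

-- aux
lemma fin2 (x : Fin 2) : x = 0 ∨ x = 1 := by fin_cases x <;> simp

lemma succ_mod_inj {L j k : ℕ} (hj : j < L) (hk : k < L) (h : (j+1) % L = (k+1) % L) : j = k := by
  rcases Nat.lt_or_ge (j+1) L with h1 | h1
  · rw [Nat.mod_eq_of_lt h1] at h
    rcases Nat.lt_or_ge (k+1) L with h2 | h2
    · rw [Nat.mod_eq_of_lt h2] at h; omega
    · have hk1 : k + 1 = L := by omega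
      rw [hk1, Nat.mod_self] at h; omega
  · have hj1 : j + 1 = L := by omega
    rw [hj1, Nat.mod_self] at h
    rcases Nat.lt_or_ge (k+1) L with h2 | h2
    · rw [Nat.mod_eq_of_lt h2] at h; omega
    · omega

lemma cyc_bij {L : ℕ} : Function.Bijective (cyc : Fin L → Fin L) :=
  Finite.injective_iff_bijective.mp fun j k h =>
    Fin.ext (succ_mod_inj j.isLt k.isLt (by simpa [cyc, Fin.ext_iff] using h))

/-- flip config -/
def sx {L : ℕ} (t : Cfg L) : Cfg L := fun j => if t j = t (cyc j) then 0 else 1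

def cA {L : ℕ} (t : Cfg L) : ℕ :=
  (Finset.univ.filter fun j => t j = 0 ∧ t (cyc j) = 1).card
def cB {L : ℕ} (t : Cfg L) : ℕ :=
  (Finset.univ.filter fun j => t j = 1 ∧ t (cyc j) = 0).card

lemma cA_eq_cB {L : ℕ} (t : Cfg L) : cA t = cB t := by
  have hsum : ∑ j : Fin L, ((t (cyc j) : ℤ)) = ∑ j : Fin L, ((t j : ℤ)) :=
    Function.Bijective.sum_comp cyc_bij (fun j => ((t j : ℕ) : ℤ))
  have hpt : ∀ j : Fin L, ((t (cyc j) : ℤ) - (t j : ℤ)) =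
      (if t j = 0 ∧ t (cyc j) = 1 then (1:ℤ) else 0) -
      (if t j = 1 ∧ t (cyc j) = 0 then (1:ℤ) else 0) := by
    intro j
    rcases fin2 (t j) with h | h <;> rcases fin2 (t (cyc j)) with h' | h' <;>
      simp [h, h']
  have h0 : (0:ℤ) = (cA t : ℤ) - (cB t : ℤ) := by
    have := Finset.sum_congr rfl (fun j (_ : j ∈ Finset.univ) => hpt j)
    rw [Finset.sum_sub_distrib] at this
    rw [hsum, sub_self] at this
    rw [this, Finset.sum_sub_distrib, Finset.sum_boole, Finset.sum_boole]
    simp [cA, cB]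
  omega

lemma nDown_sx {L : ℕ} (t : Cfg L) : nDown (sx t) = cA t + cB t := by
  have h1 : (Finset.univ.filter fun j => sx t j = 1) =
      (Finset.univ.filter fun j => (t j = 0 ∧ t (cyc j) = 1) ∨ (t j = 1 ∧ t (cyc j) = 0)) := by
    apply Finset.filter_congr
    intro j _
    rcases fin2 (t j) with h | h <;> rcases fin2 (t (cyc j)) with h' | h' <;>
      simp [sx, h, h']
  rw [nDown, h1, Finset.filter_or, Finset.card_union_of_disjoint]
  · rfl
  · rw [Finset.disjoint_filter]
    intro j _ hj hj2
    rcases hj with ⟨h0, _⟩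
    rcases hj2 with ⟨h1', _⟩
    rw [h0] at h1'; exact absurd h1' (by decide)

lemma prod_two_ite {ι : Type*} [Fintype ι] (P Q : ι → Prop) [DecidablePred P] [DecidablePred Q]
    (h : ∀ i, ¬(P i ∧ Q i)) (x y : ℂ) :
    ∏ i, (if P i then x else if Q i then y else 1) =
      x ^ (Finset.univ.filter P).card * y ^ (Finset.univ.filter Q).card := by
  have hpt : ∀ i, (if P i then x else if Q i then y else 1) =
      (if P i then x else 1) * (if Q i then y else 1) := by
    intro i
    by_cases hP : P i
    · have : ¬ Q i := fun hQ => h i ⟨hP, hQ⟩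
      simp [hP, this]
    · by_cases hQ : Q i <;> simp [hP, hQ]
  rw [Finset.prod_congr rfl fun i _ => hpt i, Finset.prod_mul_distrib,
    Finset.prod_ite, Finset.prod_ite]
  simp


lemma Rv_zero (a b c d : ℂ) (x y v : Fin 2) (h : v ≠ (if x = y then (0:Fin 2) else 1)) :
    Rv a b c d (y, v) (x, 0) = 0 := by
  fin_cases x <;> fin_cases y <;> fin_cases v <;> simp_all [Rv, Prod.ext_iff]

lemma key_term {L : ℕ} (a b c d z : ℂ) (ha : a ≠ 0) (hb : b ≠ 0)
    (hz : z * (c * d) = a * b) (t : Cfg L) :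
    z ^ (cA t) * ∏ j, Rv a b c d (t (cyc j), sx t j) (t j, 0) =
      ∏ j, (if t j = 0 then a else b) := by
  have hpt : ∀ j : Fin L,
      (Rv a b c d (t (cyc j), sx t j) (t j, 0)) *
        (if t j = 0 ∧ t (cyc j) = 1 then z * c else if t j = 1 ∧ t (cyc j) = 0 then z * d else 1) =
      (if t j = 0 then a else b) *
        (if t j = 0 ∧ t (cyc j) = 1 then b else if t j = 1 ∧ t (cyc j) = 0 then a else 1) := by
    intro j
    rcases fin2 (t j) with h | h <;> rcases fin2 (t (cyc j)) with h' | h' <;>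
      simp [Rv, sx, h, h'] <;> linear_combination hz
  have hprod := Finset.prod_congr rfl fun (j : Fin L) (_ : j ∈ Finset.univ) => hpt j
  rw [Finset.prod_mul_distrib, Finset.prod_mul_distrib] at hprod
  have hdisj : ∀ j : Fin L, ¬((t j = 0 ∧ t (cyc j) = 1) ∧ (t j = 1 ∧ t (cyc j) = 0)) := by
    intro j ⟨⟨h1, _⟩, ⟨h2, _⟩⟩; rw [h1] at h2; exact absurd h2 (by decide)
  rw [prod_two_ite _ _ hdisj, prod_two_ite _ _ hdisj] at hprod
  have hA : (Finset.univ.filter fun j => t j = 0 ∧ t (cyc j) = 1).card = cA t := rfl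
  have hB : (Finset.univ.filter fun j => t j = 1 ∧ t (cyc j) = 0).card = cB t := rfl
  rw [hA, hB, ← cA_eq_cB] at hprod
  have hab : (a * b) ^ (cA t) ≠ 0 := pow_ne_zero _ (mul_ne_zero ha hb)
  apply mul_right_cancel₀ hab
  calc z ^ cA t * (∏ j, Rv a b c d (t (cyc j), sx t j) (t j, 0)) * (a * b) ^ cA t
      = (∏ j, Rv a b c d (t (cyc j), sx t j) (t j, 0)) * ((z * c) ^ cA t * (z * d) ^ cA t) := by
        rw [← hz]; ring
    _ = (∏ j, (if t j = 0 then a else b)) * (b ^ cA t * a ^ cA t) := hprod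
    _ = (∏ j, (if t j = 0 then a else b)) * (a * b) ^ cA t := by ring

lemma key (L : ℕ) (a b c d z : ℂ) (ha : a ≠ 0) (hb : b ≠ 0) (hz : z * (c * d) = a * b) :
    ∑ s' : Cfg L, (if nDown s' % 2 = 0 then z ^ (nDown s' / 2) else 0) *
        Tmat a b c d L s' (fun _ => 0) = (a + b) ^ L := by
  unfold Tmat
  simp_rw [Finset.mul_sum]
  rw [Finset.sum_comm]
  have hterm : ∀ t : Cfg L,
      (∑ s' : Cfg L, (if nDown s' % 2 = 0 then z ^ (nDown s' / 2) else 0) *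
        ∏ j, Rv a b c d (t (cyc j), s' j) (t j, (fun (_ : Fin L) => (0:Fin 2)) j)) =
      ∏ j, (if t j = 0 then a else b) := by
    intro t
    rw [Finset.sum_eq_single (sx t)]
    · have hd : nDown (sx t) = cA t + cA t := by rw [nDown_sx, cA_eq_cB]
      rw [hd]
      simp only [Nat.add_mul_mod_self_left]
      rw [if_pos (by omega), show (cA t + cA t) / 2 = cA t by omega]
      exact key_term a b c d z ha hb hz t
    · intro s' _ hne
      have : ∃ j, s' j ≠ sx t j := by
        by_contra hcon
        push_neg at hcon
        exact hne (funext hcon)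
      obtain ⟨j, hj⟩ := this
      rw [Finset.prod_eq_zero (Finset.mem_univ j), mul_zero]
      exact Rv_zero a b c d (t j) (t (cyc j)) (s' j) (by simpa [sx] using hj)
    · intro h; exact absurd (Finset.mem_univ _) h
  rw [Finset.sum_congr rfl fun t _ => hterm t]
  rw [← Fintype.prod_sum (fun (_ : Fin L) (v : Fin 2) => if v = 0 then a else b)]
  have hv : ∀ j : Fin L, (∑ v : Fin 2, if v = 0 then a else b) = a + b := by
    intro _; simp [Fin.sum_univ_two]
  rw [Finset.prod_congr rfl fun j _ => hv j, Finset.prod_const, Finset.card_univ,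
    Fintype.card_fin]

/-- Proposition 3.6.  For nonzero real weights satisfying the
supersymmetry relation and `ζ = cd/(ab)`,
`⟨Φ̄_n(ζ⁻¹) | T |↑⋯↑⟩ = (a+b)^{2n+1}`. -/
theorem statement7 (n : ℕ) (hn : 1 ≤ n) (a b c d : ℝ)
    (ha : a ≠ 0) (hb : b ≠ 0) (hc : c ≠ 0) (hd : d ≠ 0)
    (hrel : (a ^ 2 + a * b) * (b ^ 2 + a * b) = (c ^ 2 + a * b) * (d ^ 2 + a * b)) :
    (inner ℂ (PhiBar (c * d / (a * b))⁻¹ n)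
      (Top (a : ℂ) (b : ℂ) (c : ℂ) (d : ℂ) (2 * n + 1) (allUp (2 * n + 1))) : ℂ) =
      ((a : ℂ) + (b : ℂ)) ^ (2 * n + 1) := by
  have hL : 0 < 2 * n + 1 := by omega
  set L := 2 * n + 1 with hLdef
  set ζ : ℝ := (c * d / (a * b))⁻¹ with hζ
  have hz : ((ζ : ℂ)) * ((c:ℂ) * (d:ℂ)) = (a:ℂ) * (b:ℂ) := by
    have hr : ζ * (c * d) = a * b := by
      rw [hζ, inv_div, div_mul_cancel₀ _ (mul_ne_zero hc hd)]
    have := congrArg (fun x : ℝ => (x : ℂ)) hr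
    push_cast at this
    exact this
  have happ : ∀ s' : Cfg L, (Top (a:ℂ) (b:ℂ) (c:ℂ) (d:ℂ) L (allUp L)) s'
      = Tmat (a:ℂ) (b:ℂ) (c:ℂ) (d:ℂ) L s' (fun _ => 0) := by
    intro s'
    have h1 : (Top (a:ℂ) (b:ℂ) (c:ℂ) (d:ℂ) L (allUp L)) s'
        = ∑ s : Cfg L, Tmat (a:ℂ) (b:ℂ) (c:ℂ) (d:ℂ) L s' s * (allUp L s) := rfl
    rw [h1]
    have h2 : ∀ s : Cfg L, Tmat (a:ℂ) (b:ℂ) (c:ℂ) (d:ℂ) L s' s * (allUp L s)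
        = (if s = ((fun _ => 0) : Cfg L) then Tmat (a:ℂ) (b:ℂ) (c:ℂ) (d:ℂ) L s' s else 0) := by
      intro s
      rw [show allUp L s = (if s = ((fun _ => 0) : Cfg L) then (1:ℂ) else 0) from
        EuclideanSpace.single_apply _ _ _, mul_ite, mul_one, mul_zero]
    rw [Finset.sum_congr rfl fun s _ => h2 s,
      Finset.sum_ite_eq' Finset.univ ((fun _ => 0) : Cfg L)
        (fun s => Tmat (a:ℂ) (b:ℂ) (c:ℂ) (d:ℂ) L s' s),
      if_pos (Finset.mem_univ _)]
  have hsum_apply : ∀ {ι : Type} (u : Finset ι) (f : ι → V L) (s' : Cfg L),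
      (∑ i ∈ u, f i) s' = ∑ i ∈ u, f i s' := by
    intro ι u f s'
    calc (∑ i ∈ u, f i) s' = ((WithLp.linearEquiv 2 ℂ (Cfg L → ℂ)) (∑ i ∈ u, f i)) s' := rfl
      _ = (∑ i ∈ u, (WithLp.linearEquiv 2 ℂ (Cfg L → ℂ)) (f i)) s' := by rw [map_sum]
      _ = ∑ i ∈ u, f i s' := Finset.sum_apply _ _ _
  have hPhi : ∀ s' : Cfg L, (PhiBar ζ n) s'
      = (if nDown s' % 2 = 0 then ((ζ:ℂ)) ^ (nDown s' / 2) else 0) := by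
    intro s'
    rw [PhiBar, hsum_apply]
    have : ∀ s : Cfg L,
        ((if nDown s % 2 = 0 then ((ζ:ℂ)) ^ (nDown s / 2) else 0) • bs s) s'
        = (if nDown s % 2 = 0 then ((ζ:ℂ)) ^ (nDown s / 2) else 0) *
            (if s' = s then 1 else 0) := by
      intro s
      rw [PiLp.smul_apply, smul_eq_mul]
      congr 1
      exact EuclideanSpace.single_apply _ _ _
    rw [Finset.sum_congr rfl fun s _ => this s]
    simp only [mul_ite, mul_one, mul_zero]
    rw [Finset.sum_ite_eq Finset.univ s'
      (fun s => (if nDown s % 2 = 0 then ((ζ:ℂ)) ^ (nDown s / 2) else 0)),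
      if_pos (Finset.mem_univ _)]
  have hinner : (inner ℂ (PhiBar ζ n) (Top (a:ℂ) (b:ℂ) (c:ℂ) (d:ℂ) L (allUp L)) : ℂ)
      = ∑ s' : Cfg L, (if nDown s' % 2 = 0 then ((ζ:ℂ)) ^ (nDown s' / 2) else 0) *
          Tmat (a:ℂ) (b:ℂ) (c:ℂ) (d:ℂ) L s' (fun _ => 0) := by
    rw [PiLp.inner_apply]
    refine Finset.sum_congr rfl fun s' _ => ?_
    rw [RCLike.inner_apply, happ s', hPhi s']
    rw [mul_comm]
    congr 1
    rcases eq_or_ne (nDown s' % 2) 0 with h | h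
    · rw [if_pos h, ← Complex.ofReal_pow, Complex.conj_ofReal]
    · rw [if_neg h, map_zero]
  rw [hinner, key L (a:ℂ) (b:ℂ) (c:ℂ) (d:ℂ) ((ζ:ℂ))
    (by exact_mod_cast ha) (by exact_mod_cast hb) hz]


end EightVertex
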